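/- Let k > 2 and let (A_n) be the anti-k-bonacci sequence with κ = k² + 1 and i = ⌊k/2⌋. Then for each n ≥ 1 there is an integer a_n with A_n ≡ i·k + a_n (mod κ), where 1 ≤ a_n ≤ k if k is even, and i+1 ≤ a_n ≤ i+k if k is odd. -/
import Mathlib


/-- `A` and `B` (indexed from 1) are complementary strictly increasing sequences
of positive integers: every positive integer lies in exactly one of their ranges. -/
def CompPair (A B : ℕ → ℕ) : Prop :=
  StrictMonoOn A (Set.Ici 1) ∧ StrictMonoOn B (Set.Ici 1) ∧
  (∀ n, 1 ≤ n → 1 ≤ A n) ∧ (∀ n, 1 ≤ n → 1 ≤ B n) ∧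
  ∀ m, 1 ≤ m →
    ((∃ n, 1 ≤ n ∧ A n = m) ∧ ¬(∃ n, 1 ≤ n ∧ B n = m)) ∨
    (¬(∃ n, 1 ≤ n ∧ A n = m) ∧ (∃ n, 1 ≤ n ∧ B n = m))

/-- `(A, B)` is the anti-recurrence pair for the positive linear form `a` of dimension `k`:
`A n = Σ_{j=1}^k a_j * B_{(n-1)k+j}` for all `n ≥ 1`. -/
def AntiRec (k : ℕ) (a : Fin k → ℕ) (A B : ℕ → ℕ) : Prop :=
  CompPair A B ∧
  ∀ n, 1 ≤ n → A n = ∑ j : Fin k, a j * B ((n - 1) * k + (j : ℕ) + 1)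

namespace Anti10

open scoped Classical

lemma mono_add {f : ℕ → ℕ} (hf : StrictMonoOn f (Set.Ici 1)) :
    ∀ s d, 1 ≤ s → f s + d ≤ f (s + d) := by
  intro s d hs
  induction d with
  | zero => simp
  | succ d ih =>
    have h2 : f (s + d) < f (s + d + 1) :=
      hf (by simp only [Set.mem_Ici]; omega) (by simp only [Set.mem_Ici]; omega) (by omega)
    have h3 : s + (d + 1) = s + d + 1 := by omega
    rw [h3]
    omega

lemma ge_self {f : ℕ → ℕ} (hf : StrictMonoOn f (Set.Ici 1))
    (h1 : 1 ≤ f 1) : ∀ t, 1 ≤ t → t ≤ f t := by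
  intro t ht
  obtain ⟨d, rfl⟩ : ∃ d, t = 1 + d := ⟨t - 1, by omega⟩
  have := mono_add hf 1 d (le_refl 1)
  omega

/-- the count of indices with value ≤ x -/
noncomputable def cnt (f : ℕ → ℕ) (x : ℕ) : ℕ :=
  ((Finset.Icc 1 x).filter (fun t => f t ≤ x)).card

lemma cnt_eq_card_values {f : ℕ → ℕ} (hf : StrictMonoOn f (Set.Ici 1))
    (h1 : 1 ≤ f 1) (x : ℕ) :
    cnt f x = ((Finset.Icc 1 x).filter (fun v => ∃ t, 1 ≤ t ∧ f t = v)).card := by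
  apply Finset.card_bij (fun t _ => f t)
  · intro t ht
    simp only [Finset.mem_filter, Finset.mem_Icc] at ht ⊢
    refine ⟨⟨le_trans ht.1.1 (ge_self hf h1 t ht.1.1), ht.2⟩, t, ht.1.1, rfl⟩
  · intro t ht t' ht' hh
    simp only [Finset.mem_filter, Finset.mem_Icc] at ht ht'
    exact hf.injOn (by simp only [Set.mem_Ici]; exact ht.1.1)
      (by simp only [Set.mem_Ici]; exact ht'.1.1) hh
  · intro v hv
    simp only [Finset.mem_filter, Finset.mem_Icc] at hv
    obtain ⟨⟨hv1, hv2⟩, t, ht1, rfl⟩ := hv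
    refine ⟨t, ?_, rfl⟩
    simp only [Finset.mem_filter, Finset.mem_Icc]
    exact ⟨⟨ht1, le_trans (ge_self hf h1 t ht1) hv2⟩, hv2⟩

/-- partition counting: α(x) + β(x) = x -/
lemma cnt_add_cnt (A B : ℕ → ℕ) (hc : CompPair A B) (x : ℕ) :
    cnt A x + cnt B x = x := by
  obtain ⟨hA, hB, hA1, hB1, hcov⟩ := hc
  rw [cnt_eq_card_values hA (hA1 1 le_rfl), cnt_eq_card_values hB (hB1 1 le_rfl)]
  have hneg : (Finset.Icc 1 x).filter (fun v => ∃ t, 1 ≤ t ∧ B t = v)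
      = (Finset.Icc 1 x).filter (fun v => ¬ ∃ t, 1 ≤ t ∧ A t = v) := by
    apply Finset.filter_congr
    intro v hv
    simp only [Finset.mem_Icc] at hv
    rcases hcov v hv.1 with ⟨h1, h2⟩ | ⟨h1, h2⟩ <;> simp [h1, h2]
  rw [hneg, Finset.card_filter_add_card_filter_not, Nat.card_Icc]
  omega

/-- α(f n) = n for strictly monotone f -/
lemma cnt_self {f : ℕ → ℕ} (hf : StrictMonoOn f (Set.Ici 1))
    (h1 : 1 ≤ f 1) (n : ℕ) (hn : 1 ≤ n) : cnt f (f n) = n := by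
  have hsf := ge_self hf h1
  have hset : (Finset.Icc 1 (f n)).filter (fun t => f t ≤ f n) = Finset.Icc 1 n := by
    ext t
    simp only [Finset.mem_filter, Finset.mem_Icc]
    constructor
    · rintro ⟨⟨ht1, _⟩, hle⟩
      refine ⟨ht1, ?_⟩
      by_contra hgt
      have : f n < f t := hf (by simp only [Set.mem_Ici]; exact hn)
        (by simp only [Set.mem_Ici]; exact ht1) (by omega)
      omega
    · rintro ⟨ht1, htn⟩
      have hle : f t ≤ f n := by
        rcases eq_or_lt_of_le htn with rfl | hlt
        · exact le_rfl
        · exact le_of_lt (hf (by simp only [Set.mem_Ici]; exact ht1)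
            (by simp only [Set.mem_Ici]; exact hn) hlt)
      exact ⟨⟨ht1, le_trans (hsf t ht1) hle⟩, hle⟩
  unfold cnt
  rw [hset, Nat.card_Icc]
  omega



def Ksum (k : ℕ) : ℕ := ∑ j ∈ Finset.range k, (j + 1)

lemma Ksum2 (k : ℕ) : 2 * Ksum k = k * (k + 1) := by
  induction k with
  | zero => simp [Ksum]
  | succ k ih =>
    unfold Ksum at *
    rw [Finset.sum_range_succ]
    have h1 : (k+1) * (k+1+1) = k * (k+1) + 2*(k+1) := by ring
    omega

lemma Ksum_ge (k : ℕ) (hk : 2 < k) : 6 ≤ Ksum k := by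
  have h := Ksum2 k
  have : 12 ≤ k * (k + 1) := Nat.mul_le_mul (show 3 ≤ k by omega) (show 4 ≤ k+1 by omega)
  omega

section
variable {k : ℕ} {A B : ℕ → ℕ}

lemma rec' (h : AntiRec k (fun _ => 1) A B) :
    ∀ n, 1 ≤ n → A n = ∑ j ∈ Finset.range k, B ((n - 1) * k + j + 1) := by
  intro n hn
  rw [h.2 n hn, ← Fin.sum_univ_eq_sum_range (fun j => B ((n - 1) * k + j + 1))]
  simp

lemma B_ge (h : AntiRec k (fun _ => 1) A B) : ∀ m, 1 ≤ m → m ≤ B m :=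
  ge_self h.1.2.1 (h.1.2.2.2.1 1 le_rfl)

lemma A_lb (h : AntiRec k (fun _ => 1) A B) :
    ∀ n, 1 ≤ n → (n - 1) * k * k + Ksum k ≤ A n := by
  intro n hn
  rw [rec' h n hn]
  have hle : ∀ j ∈ Finset.range k, (n - 1) * k + j + 1 ≤ B ((n - 1) * k + j + 1) :=
    fun j _ => B_ge h _ (by omega)
  have hsum : ∑ j ∈ Finset.range k, ((n - 1) * k + j + 1) = (n - 1) * k * k + Ksum k := by
    have he : ∀ j, (n - 1) * k + j + 1 = (n - 1) * k + (j + 1) := fun j => by ring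
    simp only [he]
    rw [Finset.sum_add_distrib, Finset.sum_const, Finset.card_range, smul_eq_mul]
    unfold Ksum
    ring
  calc (n - 1) * k * k + Ksum k = ∑ j ∈ Finset.range k, ((n - 1) * k + j + 1) := hsum.symm
    _ ≤ ∑ j ∈ Finset.range k, B ((n - 1) * k + j + 1) := Finset.sum_le_sum hle

lemma A_ge2 (hk : 2 < k) (h : AntiRec k (fun _ => 1) A B) :
    ∀ t, 1 ≤ t → 2 * t + 1 ≤ A t := by
  intro t ht
  have h1 := A_lb h t ht
  have h6 := Ksum_ge k hk
  have h9 : 9 ≤ k * k := Nat.mul_le_mul (show 3 ≤ k by omega) (show 3 ≤ k by omega)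
  have h2 : (t - 1) * 9 ≤ (t - 1) * (k * k) := Nat.mul_le_mul_left _ h9
  have h3 : (t-1) * k * k = (t-1) * (k*k) := by ring
  omega

lemma A_gap (hk : 2 < k) (h : AntiRec k (fun _ => 1) A B) :
    ∀ t, 1 ≤ t → A t + k * k ≤ A (t + 1) := by
  intro t ht
  rw [rec' h t ht, rec' h (t+1) (by omega)]
  have hstep : ∀ j ∈ Finset.range k,
      B ((t - 1) * k + j + 1) + k ≤ B ((t + 1 - 1) * k + j + 1) := by
    intro j _
    have hidx : (t + 1 - 1) * k + j + 1 = ((t - 1) * k + j + 1) + k := by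
      have : t + 1 - 1 = (t - 1) + 1 := by omega
      rw [this]; ring
    rw [hidx]
    exact mono_add h.1.2.1 _ k (by omega)
  calc (∑ j ∈ Finset.range k, B ((t - 1) * k + j + 1)) + k * k
      = ∑ j ∈ Finset.range k, (B ((t - 1) * k + j + 1) + k) := by
        rw [Finset.sum_add_distrib, Finset.sum_const, Finset.card_range, smul_eq_mul]
    _ ≤ ∑ j ∈ Finset.range k, B ((t + 1 - 1) * k + j + 1) := Finset.sum_le_sum hstep

lemma Cmono (hk : 2 < k) (h : AntiRec k (fun _ => 1) A B) :
    ∀ s t, 1 ≤ s → s ≤ t → A s + t ≤ A t + s := by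
  intro s t hs hst
  obtain ⟨d, rfl⟩ : ∃ d, t = s + d := ⟨t - s, by omega⟩
  clear hst
  induction d with
  | zero => simp
  | succ d ih =>
    have hgap := A_gap hk h (s + d) (by omega)
    have h2 : 2 ≤ k * k := by nlinarith
    have h3 : s + (d + 1) = (s + d) + 1 := by omega
    rw [h3]
    omega

lemma not_A_eq_B (h : AntiRec k (fun _ => 1) A B) :
    ∀ t m, 1 ≤ t → 1 ≤ m → A t ≠ B m := by
  intro t m ht hm heq
  have hB1 : 1 ≤ B m := h.1.2.2.2.1 m hm
  rcases h.1.2.2.2.2 (B m) hB1 with ⟨h1, h2⟩ | ⟨h1, h2⟩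
  · exact h2 ⟨m, hm, rfl⟩
  · exact h1 ⟨t, ht, heq⟩

lemma lt_iff (hk : 2 < k) (h : AntiRec k (fun _ => 1) A B) :
    ∀ t m, 1 ≤ t → 1 ≤ m → (A t < B m ↔ A t < t + m) := by
  intro t m ht hm
  have hA := h.1.1
  have hB := h.1.2.1
  have hA1 : 1 ≤ A 1 := h.1.2.2.1 1 le_rfl
  have hB1 : 1 ≤ B 1 := h.1.2.2.2.1 1 le_rfl
  have hcntB : cnt A (A t) + cnt B (A t) = A t := cnt_add_cnt A B h.1 (A t)
  have hcA : cnt A (A t) = t := cnt_self hA hA1 t ht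
  -- A t < B m ↔ cnt B (A t) < m
  have hiff : A t < B m ↔ cnt B (A t) < m := by
    constructor
    · intro hlt
      have hsub : (Finset.Icc 1 (A t)).filter (fun s => B s ≤ A t) ⊆ Finset.Icc 1 (m-1) := by
        intro s hsmem
        simp only [Finset.mem_filter, Finset.mem_Icc] at hsmem ⊢
        refine ⟨hsmem.1.1, ?_⟩
        by_contra hge
        have : B m ≤ B s := by
          rcases eq_or_lt_of_le (show m ≤ s by omega) with rfl | hms
          · exact le_rfl
          · exact le_of_lt (hB (by simp only [Set.mem_Ici]; exact hm)
              (by simp only [Set.mem_Ici]; exact hsmem.1.1) hms)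
        omega
      have := Finset.card_le_card hsub
      rw [Nat.card_Icc] at this
      unfold cnt
      omega
    · intro hlt
      by_contra hge
      have hsub : Finset.Icc 1 m ⊆ (Finset.Icc 1 (A t)).filter (fun s => B s ≤ A t) := by
        intro s hsmem
        simp only [Finset.mem_filter, Finset.mem_Icc] at hsmem ⊢
        have hBs : B s ≤ B m := by
          rcases eq_or_lt_of_le hsmem.2 with rfl | hsm
          · exact le_rfl
          · exact le_of_lt (hB (by simp only [Set.mem_Ici]; exact hsmem.1)
              (by simp only [Set.mem_Ici]; exact hm) hsm)
        have hs : s ≤ B s := B_ge h s hsmem.1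
        omega
      have := Finset.card_le_card hsub
      rw [Nat.card_Icc] at this
      unfold cnt at hlt
      omega
  rw [hiff]
  omega

/-- the jump-counting function -/
noncomputable def gam (A : ℕ → ℕ) (m : ℕ) : ℕ :=
  ((Finset.Icc 1 m).filter (fun t => A t < t + m)).card

lemma B_eq (hk : 2 < k) (h : AntiRec k (fun _ => 1) A B) :
    ∀ m, 1 ≤ m → B m = m + gam A m := by
  intro m hm
  have hB1 : 1 ≤ B 1 := h.1.2.2.2.1 1 le_rfl
  have hcnt : cnt A (B m) + cnt B (B m) = B m := cnt_add_cnt A B h.1 (B m)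
  have hcB : cnt B (B m) = m := cnt_self h.1.2.1 hB1 m hm
  have hset : (Finset.Icc 1 (B m)).filter (fun t => A t ≤ B m)
      = (Finset.Icc 1 m).filter (fun t => A t < t + m) := by
    ext t
    simp only [Finset.mem_filter, Finset.mem_Icc]
    constructor
    · rintro ⟨⟨ht1, _⟩, hle⟩
      have hne : A t ≠ B m := not_A_eq_B h t m ht1 hm
      have hlt : A t < t + m := (lt_iff hk h t m ht1 hm).1 (by omega)
      have h2t := A_ge2 hk h t ht1
      exact ⟨⟨ht1, by omega⟩, hlt⟩
    · rintro ⟨⟨ht1, htm⟩, hlt⟩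
      have hlt2 : A t < B m := (lt_iff hk h t m ht1 hm).2 hlt
      have hmB : m ≤ B m := B_ge h m hm
      exact ⟨⟨ht1, by omega⟩, by omega⟩
  rw [hcB] at hcnt
  unfold cnt at hcnt
  rw [hset] at hcnt
  unfold gam
  omega

lemma gam_eq (hk : 2 < k) (h : AntiRec k (fun _ => 1) A B)
    {m g : ℕ} (hgm : g ≤ m)
    (h1 : ∀ t, 1 ≤ t → t ≤ g → A t < t + m)
    (h2 : m + (g + 1) ≤ A (g + 1)) : gam A m = g := by
  have hset : (Finset.Icc 1 m).filter (fun t => A t < t + m) = Finset.Icc 1 g := by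
    ext t
    simp only [Finset.mem_filter, Finset.mem_Icc]
    constructor
    · rintro ⟨⟨ht1, htm⟩, hlt⟩
      refine ⟨ht1, ?_⟩
      by_contra hgt
      have hge : A (g+1) + t ≤ A t + (g+1) := Cmono hk h (g+1) t (by omega) (by omega)
      omega
    · rintro ⟨ht1, htg⟩
      exact ⟨⟨ht1, by omega⟩, h1 t ht1 htg⟩
  unfold gam
  rw [hset, Nat.card_Icc]
  omega

lemma B_first (hk : 2 < k) (h : AntiRec k (fun _ => 1) A B) :
    ∀ j, 1 ≤ j → j ≤ k → B j = j := by
  intro j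
  induction j using Nat.strong_induction_on with
  | _ j ih =>
    intro hj1 hjk
    have hnotA : ¬ ∃ t, 1 ≤ t ∧ A t = j := by
      rintro ⟨t, ht, rfl⟩
      have hlb := A_lb h t ht
      have h2 := Ksum2 k
      have h3 : k * (k + 1) = k * k + k := by ring
      have h9 : 3 * k ≤ k * k := Nat.mul_le_mul_right k (by omega)
      omega
    obtain ⟨m, hm1, hmB⟩ : ∃ m, 1 ≤ m ∧ B m = j := by
      rcases h.1.2.2.2.2 j hj1 with ⟨h1, _⟩ | ⟨_, h2⟩
      · exact absurd h1 hnotA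
      · exact h2
    have hmj : m ≤ j := by
      have := B_ge h m hm1
      omega
    rcases eq_or_lt_of_le hmj with rfl | hlt
    · exact hmB
    · have := ih m hlt hm1 (by omega)
      omega

lemma A1_eq (hk : 2 < k) (h : AntiRec k (fun _ => 1) A B) : A 1 = Ksum k := by
  rw [rec' h 1 le_rfl]
  unfold Ksum
  apply Finset.sum_congr rfl
  intro j hj
  simp only [Finset.mem_range] at hj
  rw [show (1 - 1) * k + j + 1 = j + 1 by simp]
  exact B_first hk h (j + 1) (by omega) (by omega)

/-- convert an integer witness into the natural-number statement -/
lemma finish (n An : ℕ)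
    (hz : ∃ za : ℤ, ((k % 2) * (k / 2) + 1 : ℤ) ≤ za ∧ za ≤ (k % 2) * (k / 2) + k ∧
      (An : ℤ) = ((k : ℤ) ^ 2 + 1) * ((n - 1 : ℕ) : ℤ) + ((k / 2 : ℕ) : ℤ) * k + za) :
    ∃ a : ℕ, k % 2 * (k / 2) + 1 ≤ a ∧ a ≤ k % 2 * (k / 2) + k ∧
      An = (k ^ 2 + 1) * (n - 1) + (k / 2) * k + a := by
  obtain ⟨za, hlo, hhi, heq⟩ := hz
  have hpos : 0 ≤ za := by
    have h1 : (0:ℤ) ≤ ((k:ℤ) % 2) * ((k:ℤ) / 2) := by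
      apply mul_nonneg <;> omega
    have h2 : ((k / 2 : ℕ) : ℤ) = (k:ℤ) / 2 := by push_cast; ring
    have h3 : ((k % 2 : ℕ) : ℤ) = (k:ℤ) % 2 := by push_cast; ring
    nlinarith [hlo]
  refine ⟨za.toNat, ?_, ?_, ?_⟩
  · have ha : (za.toNat : ℤ) = za := Int.toNat_of_nonneg hpos
    have : ((k % 2 * (k / 2) + 1 : ℕ) : ℤ) ≤ (za.toNat : ℤ) := by push_cast; omega
    exact_mod_cast this
  · have ha : (za.toNat : ℤ) = za := Int.toNat_of_nonneg hpos
    have : ((za.toNat : ℕ) : ℤ) ≤ ((k % 2 * (k / 2) + k : ℕ) : ℤ) := by push_cast; omega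
    exact_mod_cast this
  · have ha : (za.toNat : ℤ) = za := Int.toNat_of_nonneg hpos
    have : ((An : ℕ) : ℤ) = (((k ^ 2 + 1) * (n - 1) + (k / 2) * k + za.toNat : ℕ) : ℤ) := by
      push_cast
      rw [heq, ha]
      push_cast
      ring
    exact_mod_cast this



set_option maxHeartbeats 1600000 in
lemma key (hk : 2 < k) (h : AntiRec k (fun _ => 1) A B) :
    ∀ n, 1 ≤ n → ∃ a : ℕ, k % 2 * (k / 2) + 1 ≤ a ∧ a ≤ k % 2 * (k / 2) + k ∧
      A n = (k ^ 2 + 1) * (n - 1) + (k / 2) * k + a := by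
  intro n
  induction n using Nat.strong_induction_on with
  | _ n ih =>
  intro hn
  have hKs2 := Ksum2 k
  have hKs6 := Ksum_ge k hk
  obtain ⟨i, r, hir, hr2⟩ : ∃ i r, k = 2 * i + r ∧ r < 2 := ⟨k / 2, k % 2, by omega, by omega⟩
  have hk2 : k / 2 = i := by omega
  have hkm : k % 2 = r := by omega
  by_cases hn1 : n = 1
  · -- base case
    subst hn1
    have hA1 : A 1 = Ksum k := A1_eq hk h
    apply finish (k := k) 1 (A 1)
    refine ⟨(Ksum k : ℤ) - ((k/2 : ℕ) : ℤ) * k, ?_, ?_, by rw [hA1]; push_cast; ring⟩ <;>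
    · have hKz : 2 * (Ksum k : ℤ) = (k : ℤ) * (k + 1) := by exact_mod_cast hKs2
      have hcast : ((k/2 : ℕ) : ℤ) = i := by rw [hk2]
      have hkmz : ((k:ℤ) % 2) = r := by omega
      have hkdz : ((k:ℤ) / 2) = i := by omega
      rw [hcast, hkmz, hkdz]
      have hkz : (k : ℤ) = 2 * i + r := by exact_mod_cast hir
      interval_cases r <;> nlinarith [hKz, hkz]
  · -- inductive step, n ≥ 2
    have hn2 : 2 ≤ n := by omega
    obtain ⟨w, hw⟩ : ∃ w, w = (n - 1) * k := ⟨_, rfl⟩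
    obtain ⟨m, hm⟩ : ∃ m, m = w + 1 := ⟨_, rfl⟩
    obtain ⟨g, hg⟩ : ∃ g, g = Nat.findGreatest (fun t => A t < t + m) m := ⟨_, rfl⟩
    have hgm : g ≤ m := hg ▸ Nat.findGreatest_le m
    have F2 : 1 ≤ g → A g < g + m :=
      fun hg1 => Nat.findGreatest_of_ne_zero (P := fun t => A t < t + m) hg.symm (by omega)
    have F3 : ∀ t, g < t → t + m ≤ A t := by
      intro t hgt
      by_cases htm : t ≤ m
      · have := Nat.findGreatest_is_greatest (P := fun t => A t < t + m) (hg ▸ hgt) htm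
        omega
      · have := A_ge2 hk h t (by omega)
        omega
    have F4 : ∀ t, 1 ≤ t → t ≤ g → A t < t + m := by
      intro t ht htg
      rcases eq_or_lt_of_le htg with rfl | hlt
      · exact F2 ht
      · have hc := Cmono hk h t g ht (le_of_lt hlt)
        have := F2 (by omega)
        omega
    have F5 : g + 1 ≤ m := by
      by_cases hg0 : g = 0
      · omega
      · have := F2 (by omega)
        have := A_ge2 hk h g (by omega)
        omega
    have hg1n : g + 1 < n := by
      by_contra hcon
      have hg1 : 1 ≤ g := by omega
      obtain ⟨g', hg'⟩ : ∃ g', g = g' + 1 := ⟨g - 1, by omega⟩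
      have h1 := F2 hg1
      rw [hg'] at h1
      have h2 : g' * k * k + Ksum k ≤ A (g' + 1) := by
        have := A_lb h (g' + 1) (by omega)
        simpa using this
      have h3 : (n - 1) * k ≤ (g' + 1) * k := Nat.mul_le_mul_right k (by omega)
      have h4 : (g' + 1) * k = g' * k + k := by ring
      have h6 : (g' * k) * 3 ≤ (g' * k) * k := Nat.mul_le_mul_left _ (by omega)
      have h7 : g' * 3 ≤ g' * k := Nat.mul_le_mul_left _ (by omega)
      have h8 : k * (k + 1) = k * k + k := by ring
      have h9 : 3 * k ≤ k * k := Nat.mul_le_mul_right k (by omega)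
      have h10 : g' * k * k = (g' * k) * k := by ring
      omega
    obtain ⟨a', ha'lo, ha'hi, hAg1⟩ := ih (g + 1) hg1n (by omega)
    rw [show g + 1 - 1 = g from rfl] at hAg1
    have hrec := rec' h n hn
    -- shared integer facts
    have hwz : (w : ℤ) = ((n - 1 : ℕ) : ℤ) * k := by rw [hw]; push_cast; ring
    have zAg1 : (A (g+1) : ℤ) = ((k:ℤ)^2 + 1) * g + (i : ℤ) * k + a' := by
      rw [hAg1, hk2]; push_cast; ring
    have hKz : 2 * (Ksum k : ℤ) = (k : ℤ) * (k + 1) := by exact_mod_cast hKs2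
    have hkz : (k : ℤ) = 2 * i + r := by exact_mod_cast hir
    have ha'loz : (r : ℤ) * i + 1 ≤ (a' : ℤ) := by
      have : ((k % 2 * (k / 2) + 1 : ℕ) : ℤ) ≤ (a' : ℤ) := by exact_mod_cast ha'lo
      rw [hk2, hkm] at ha'lo
      push_cast at this ⊢
      omega
    have ha'hiz : (a' : ℤ) ≤ (r : ℤ) * i + k := by
      rw [hk2, hkm] at ha'hi
      exact_mod_cast ha'hi
    have hiz : 1 ≤ (i : ℤ) := by omega
    have hgz : (0 : ℤ) ≤ (g : ℤ) := by positivity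
    have hn1z : (1 : ℤ) ≤ ((n - 1 : ℕ) : ℤ) := by omega
    have hKzi : 2 * (i:ℤ) * (Ksum k) = (i:ℤ) * ((k:ℤ) * ((k:ℤ) + 1)) := by
      linear_combination (i:ℤ) * hKz
    have hkm2 : (k:ℤ) % 2 = r := by omega
    have hkd2 : (k:ℤ) / 2 = i := by omega
    have hkzpos : (0:ℤ) ≤ (k:ℤ) := by positivity
    by_cases hjump : A (g + 1) < (g + 1) + (w + k)
    · -- jump case
      obtain ⟨q, hq⟩ : ∃ q, q = (g + 1) + w + k - A (g + 1) := ⟨_, rfl⟩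
      have hF3g1 : (g + 1) + m ≤ A (g + 1) := F3 (g + 1) (by omega)
      have hq1 : 1 ≤ q := by omega
      have hqk : q ≤ k - 1 := by omega
      have hAq : A (g + 1) + q = (g + 1) + w + k := by omega
      have hgamj : ∀ j, j < k → gam A (w + 1 + j) = if k - q ≤ j then g + 1 else g := by
        intro j hj
        by_cases hcond : k - q ≤ j
        · rw [if_pos hcond]
          apply gam_eq hk h (by omega)
          · intro t ht htg
            rcases eq_or_lt_of_le htg with rfl | hlt
            · omega
            · have := F4 t ht (by omega)
              omega
          · have hgap := A_gap hk h (g + 1) (by omega)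
            have h9 : 3 * k ≤ k * k := Nat.mul_le_mul_right k (by omega)
            omega
        · rw [if_neg hcond]
          apply gam_eq hk h (by omega)
          · intro t ht htg
            have := F4 t ht htg
            omega
          · omega
      have hsum : A n = w * k + Ksum k + (k * g + q) := by
        rw [hrec]
        have hBj : ∀ j ∈ Finset.range k, B ((n - 1) * k + j + 1)
            = (w + (j + 1)) + (g + (if k - q ≤ j then 1 else 0)) := by
          intro j hj
          simp only [Finset.mem_range] at hj
          rw [show (n - 1) * k + j + 1 = (w + 1) + j by omega]
          rw [B_eq hk h ((w + 1) + j) (by omega)]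
          rw [show (w + 1) + j = w + 1 + j from rfl, hgamj j hj]
          split <;> omega
        rw [Finset.sum_congr rfl hBj, Finset.sum_add_distrib]
        have e2 : ∑ j ∈ Finset.range k, (w + (j + 1)) = k * w + Ksum k := by
          rw [Finset.sum_add_distrib, Finset.sum_const, Finset.card_range, smul_eq_mul]
          rfl
        have e3 : ∑ j ∈ Finset.range k, (g + if k - q ≤ j then 1 else 0) = k * g + q := by
          rw [Finset.sum_add_distrib, Finset.sum_const, Finset.card_range, smul_eq_mul,
            Finset.sum_boole]
          have hfil : (Finset.range k).filter (fun j => k - q ≤ j) = Finset.Ico (k - q) k := by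
            ext x
            simp only [Finset.mem_filter, Finset.mem_range, Finset.mem_Ico]
            omega
          rw [hfil, Nat.card_Ico, Nat.cast_id]
          omega
        rw [e2, e3]
        ring
      apply finish (k := k) n (A n)
      have zsum : (A n : ℤ) = (w : ℤ) * k + Ksum k + (k * g + q) := by
        rw [hsum]; push_cast; ring
      have zAq : (A (g+1) : ℤ) + q = (g:ℤ) + 1 + w + k := by exact_mod_cast hAq
      have E1 : (w:ℤ) = (k:ℤ)^2 * g + (i:ℤ) * k + a' + q - 1 - k := by
        linarith [zAq, zAg1]
      have hq1z : (1:ℤ) ≤ (q:ℤ) := by exact_mod_cast hq1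
      have hqkz : (q:ℤ) ≤ (k:ℤ) - 1 := by omega
      have hNw : (k:ℤ) * ((n-1:ℕ):ℤ) = (w:ℤ) := by rw [hwz]; ring
      have P1 : (0:ℤ) ≤ ((k:ℤ) - 1) * ((q:ℤ) - 1) :=
        mul_nonneg (by linarith) (by linarith)
      have P2 : (0:ℤ) ≤ ((k:ℤ) - 1) * ((k:ℤ) - 1 - (q:ℤ)) :=
        mul_nonneg (by linarith) (by linarith)
      refine ⟨(Ksum k : ℤ) + k * g + q - (i : ℤ) * k - ((n-1:ℕ):ℤ), ?_, ?_, ?_⟩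
      · rw [hkm2, hkd2]
        by_contra hcon
        push_neg at hcon
        have hcon' : (Ksum k : ℤ) + k * g + q - (i:ℤ)*k - ((n-1:ℕ):ℤ) ≤ (r:ℤ)*i := by
          linarith
        have hconk := mul_le_mul_of_nonneg_left hcon' hkzpos
        rcases (show r = 0 ∨ r = 1 by omega) with hr | hr <;> subst hr <;>
          norm_num at hkz ha'loz ha'hiz hconk <;>
          rw [hkz] at E1 hqkz hNw hconk hKz hKzi P1 P2 <;>
          linarith [E1, hq1z, hqkz, hNw, hconk, hKz, hKzi, ha'loz, ha'hiz, hgz, hiz, P1, P2]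
      · rw [hkm2, hkd2]
        by_contra hcon
        push_neg at hcon
        have hcon' : (r:ℤ)*i + k + 1 ≤ (Ksum k : ℤ) + k * g + q - (i:ℤ)*k - ((n-1:ℕ):ℤ) := by
          linarith
        have hconk := mul_le_mul_of_nonneg_left hcon' hkzpos
        rcases (show r = 0 ∨ r = 1 by omega) with hr | hr <;> subst hr <;>
          norm_num at hkz ha'loz ha'hiz hconk <;>
          rw [hkz] at E1 hqkz hNw hconk hKz hKzi P1 P2 <;>
          linarith [E1, hq1z, hqkz, hNw, hconk, hKz, hKzi, ha'loz, ha'hiz, hgz, hiz, P1, P2]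
      · rw [hk2]
        rw [zsum, hwz]
        push_cast
        ring
    · -- no-jump case
      push_neg at hjump
      have hgamj : ∀ j, j < k → gam A (w + 1 + j) = g := by
        intro j hj
        apply gam_eq hk h (by omega)
        · intro t ht htg
          have := F4 t ht htg
          omega
        · omega
      have hsum : A n = w * k + Ksum k + k * g := by
        rw [hrec]
        have hBj : ∀ j ∈ Finset.range k, B ((n - 1) * k + j + 1) = (w + (j + 1)) + g := by
          intro j hj
          simp only [Finset.mem_range] at hj
          rw [show (n - 1) * k + j + 1 = (w + 1) + j by omega]
          rw [B_eq hk h ((w + 1) + j) (by omega), hgamj j hj]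
          omega
        rw [Finset.sum_congr rfl hBj, Finset.sum_add_distrib]
        have e2 : ∑ j ∈ Finset.range k, (w + (j + 1)) = k * w + Ksum k := by
          rw [Finset.sum_add_distrib, Finset.sum_const, Finset.card_range, smul_eq_mul]
          rfl
        rw [e2, Finset.sum_const, Finset.card_range, smul_eq_mul]
        ring
      apply finish (k := k) n (A n)
      have zsum : (A n : ℤ) = (w : ℤ) * k + Ksum k + k * g := by
        rw [hsum]; push_cast; ring
      have znj : ((g:ℤ) + 1) + ((w : ℤ) + k) ≤ (A (g+1) : ℤ) := by exact_mod_cast hjump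
      have E1' : (w:ℤ) + k + 1 ≤ (k:ℤ)^2 * g + (i:ℤ)*k + a' := by
        linarith [znj, zAg1]
      have hNw : (k:ℤ) * ((n-1:ℕ):ℤ) = (w:ℤ) := by rw [hwz]; ring
      have hgcase : g = 0 ∨ ∃ a'' : ℕ, (r:ℤ)*i + 1 ≤ (a'':ℤ) ∧ (a'':ℤ) ≤ (r:ℤ)*i + k ∧
          (k:ℤ)^2 * (g:ℤ) ≤ (w:ℤ) + (k:ℤ)^2 - (i:ℤ)*k - a'' + 1 := by
        by_cases hg0 : g = 0
        · exact Or.inl hg0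
        · right
          obtain ⟨a'', hlo'', hhi'', hAg⟩ := ih g (by omega) (by omega)
          refine ⟨a'', ?_, ?_, ?_⟩
          · rw [hk2, hkm] at hlo''
            push_cast
            omega
          · rw [hk2, hkm] at hhi''
            exact_mod_cast hhi''
          · have hF2 := F2 (by omega)
            have hAgz : (A g : ℤ) = ((k:ℤ)^2 + 1) * ((g:ℤ) - 1) + (i:ℤ)*k + a'' := by
              rw [hAg, hk2]
              push_cast
              have hc : ((g - 1 : ℕ) : ℤ) = (g:ℤ) - 1 := by omega
              rw [hc]
              try ring
            have hF2z : (A g : ℤ) < (g:ℤ) + (w:ℤ) + 1 := by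
              rw [hm] at hF2
              exact_mod_cast hF2
            linarith [hAgz, hF2z]
      refine ⟨(Ksum k : ℤ) + k * g - (i : ℤ) * k - ((n-1:ℕ):ℤ), ?_, ?_, ?_⟩
      · rw [hkm2, hkd2]
        by_contra hcon
        push_neg at hcon
        have hcon' : (Ksum k : ℤ) + k * g - (i:ℤ)*k - ((n-1:ℕ):ℤ) ≤ (r:ℤ)*i := by
          linarith
        have hconk := mul_le_mul_of_nonneg_left hcon' hkzpos
        rcases (show r = 0 ∨ r = 1 by omega) with hr | hr <;> subst hr <;>
          norm_num at hkz ha'loz ha'hiz hconk <;>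
          rw [hkz] at E1' hNw hconk hKz hKzi <;>
          linarith [E1', hNw, hconk, hKz, hKzi, ha'loz, ha'hiz, hgz, hiz]
      · rw [hkm2, hkd2]
        by_contra hcon
        push_neg at hcon
        have hcon' : (r:ℤ)*i + k + 1 ≤ (Ksum k : ℤ) + k * g - (i:ℤ)*k - ((n-1:ℕ):ℤ) := by
          linarith
        have hconk := mul_le_mul_of_nonneg_left hcon' hkzpos
        rcases hgcase with hg0 | ⟨a'', hlo'', hhi'', E3⟩
        · subst hg0
          rcases (show r = 0 ∨ r = 1 by omega) with hr | hr <;> subst hr <;>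
            norm_num at hkz ha'loz ha'hiz hconk <;>
            rw [hkz] at E1' hNw hconk hKz hKzi <;>
            linarith [E1', hNw, hconk, hKz, hKzi, ha'loz, ha'hiz, hiz, hn1z]
        · rcases (show r = 0 ∨ r = 1 by omega) with hr | hr <;> subst hr <;>
            norm_num at hkz ha'loz ha'hiz hconk hlo'' hhi'' <;>
            rw [hkz] at E1' hNw hconk hKz hKzi E3 <;>
            linarith [E1', hNw, hconk, hKz, hKzi, ha'loz, ha'hiz, hgz, hiz, hlo'', hhi'', E3]
      · rw [hk2]
        rw [zsum, hwz]
        push_cast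
        ring


end

end Anti10

/-- The anti-k-bonacci numbers satisfy `A n ≡ i·k + a_n (mod κ)` with bounded `a_n`,
where `i = ⌊k/2⌋` and `κ = k² + 1`. -/
theorem stmt10 (k : ℕ) (hk : 2 < k) (A B : ℕ → ℕ)
    (h : AntiRec k (fun _ => 1) A B) :
    ∀ n, 1 ≤ n → ∃ an : ℕ,
      A n ≡ (k / 2) * k + an [MOD k ^ 2 + 1] ∧
      (k % 2 = 0 → 1 ≤ an ∧ an ≤ k) ∧
      (k % 2 = 1 → k / 2 + 1 ≤ an ∧ an ≤ k / 2 + k) := by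
  intro n hn
  obtain ⟨a, hlo, hhi, heq⟩ := Anti10.key hk h n hn
  refine ⟨a, ?_, ?_, ?_⟩
  · show A n % (k ^ 2 + 1) = ((k / 2) * k + a) % (k ^ 2 + 1)
    rw [heq, Nat.add_assoc]
    exact Nat.mul_add_mod _ _ _
  · intro he
    rw [he] at hlo hhi
    simp only [Nat.zero_mul, Nat.zero_add] at hlo hhi
    omega
  · intro ho
    rw [ho] at hlo hhi
    simp only [Nat.one_mul] at hlo hhi
    omega
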